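/- The group ⟨a, b | a² = b⁻¹ a² b⟩ is not isomorphic to the free group on two generators. -/

import Mathlib

open FreeGroup

def twofoilRels : Set (FreeGroup (Fin 2)) :=
  {(of 0)^2 * ((of 1)⁻¹ * (of 0)^2 * of 1)⁻¹}

section Aux

variable {G : Type*} [Group G]

/-- Homs out of the presented group correspond to maps satisfying the relations. -/
def twofoilHomEquiv :
    (PresentedGroup twofoilRels →* G) ≃
      {f : Fin 2 → G // ∀ r ∈ twofoilRels, FreeGroup.lift f r = 1} where
  toFun φ := ⟨fun i => φ (PresentedGroup.of i), by
    intro r hr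
    have hl : FreeGroup.lift (fun i => φ (PresentedGroup.of i)) =
        φ.comp (PresentedGroup.mk twofoilRels) := by
      ext i
      simp [PresentedGroup.of]
    rw [hl]
    have hmem : r ∈ Subgroup.normalClosure twofoilRels :=
      Subgroup.subset_normalClosure hr
    have : PresentedGroup.mk twofoilRels r = 1 :=
      (QuotientGroup.eq_one_iff r).2 hmem
    simp [MonoidHom.comp_apply, this]⟩
  invFun f := PresentedGroup.toGroup f.2
  left_inv φ := by
    ext i
    simp
  right_inv f := by
    ext i
    simp

/-- Precomposition with a `MulEquiv` gives an equiv of hom sets. -/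
def homCompEquiv {H K : Type*} [Group H] [Group K] (e : H ≃* K) :
    (K →* G) ≃ (H →* G) where
  toFun g := g.comp e.toMonoidHom
  invFun g := g.comp e.symm.toMonoidHom
  left_inv g := by ext x; simp
  right_inv g := by ext x; simp

end Aux

set_option maxRecDepth 40000 in
/-- `⟨a, b | a² = b⁻¹ a² b⟩` is not isomorphic to the free group on two generators. -/
theorem stmt_2 :
    IsEmpty (PresentedGroup twofoilRels ≃* FreeGroup (Fin 2)) := by
  rw [isEmpty_iff]
  intro e
  set G := Equiv.Perm (Fin 3)
  have E : (Fin 2 → G) ≃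
      {f : Fin 2 → G // (f 0)^2 * ((f 1)⁻¹ * (f 0)^2 * f 1)⁻¹ = 1} :=
    (FreeGroup.lift.trans ((homCompEquiv (G := G) e).trans twofoilHomEquiv)).trans
      (Equiv.subtypeEquivRight (fun f => by
        constructor
        · intro h
          have := h _ (Set.mem_singleton _)
          simp at this
          convert this using 2
          rfl
        · intro h r hr
          rw [Set.mem_singleton_iff.mp hr]
          simp
          convert h using 2
          rfl))
  have hcard := Fintype.card_congr E
  have h1 : Fintype.card (Fin 2 → G) = 36 := by
    show Fintype.card (Fin 2 → Equiv.Perm (Fin 3)) = 36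
    rw [Fintype.card_fun, Fintype.card_perm]
    decide
  have h2 : Fintype.card
      {f : Fin 2 → G // (f 0)^2 * ((f 1)⁻¹ * (f 0)^2 * f 1)⁻¹ = 1} = 30 := by
    decide
  rw [h1, h2] at hcard
  exact absurd hcard (by norm_num)
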